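/- Let n ≥ 1 and let F : [0,1]^n → [0,1]^n be a continuous map such that F(A_i) ⊆ A_i and F(O_i) ⊆ O_i for every 1 ≤ i ≤ n. Then F is surjective. -/

import Mathlib

/-- The unit cube `[0,1]^n` in `ℝ^n`. -/
def unitCube (n : ℕ) : Set (Fin n → ℝ) :=
  {x | ∀ i : Fin n, x i ∈ Set.Icc (0 : ℝ) 1}


namespace Kuhn

/-- A Kuhn simplex of dimension `n` in the grid `{0,…,p}^n`, given as its
increasing chain of vertices `v 0 < v 1 < … < v n` (padded constantly beyond `n`,
and with all coordinates `≥ n` equal to `0`). -/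
structure IsSimp (n p : ℕ) (v : ℕ → ℕ → ℕ) : Prop where
  step : ∀ k < n, ∃ i < n, v (k+1) = Function.update (v k) i (v k i + 1)
  complete : ∀ i < n, v n i = v 0 i + 1
  zero : ∀ i, n ≤ i → v 0 i = 0
  grid : ∀ i, v n i ≤ p
  pad : ∀ k, n ≤ k → v k = v n

theorem IsSimp.mono {n p : ℕ} {v : ℕ → ℕ → ℕ} (h : IsSimp n p v) :
    ∀ k k' i, k ≤ k' → v k i ≤ v k' i := by
  have key : ∀ k i, v k i ≤ v (k+1) i := by
    intro k i
    rcases lt_or_ge k n with hk | hk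
    · obtain ⟨j, hj, hstep⟩ := h.step k hk
      rw [hstep]
      rcases eq_or_ne i j with rfl | hij
      · simp
      · rw [Function.update_of_ne hij]
    · rw [h.pad k hk, h.pad (k+1) (by omega)]
  intro k k' i hkk'
  induction hkk' with
  | refl => exact le_refl _
  | step h' ih => exact le_trans ih (key _ i)

theorem IsSimp.hi_const {n p : ℕ} {v : ℕ → ℕ → ℕ} (h : IsSimp n p v) :
    ∀ k i, n ≤ i → v k i = v 0 i := by
  have key : ∀ k ≤ n, ∀ i, n ≤ i → v k i = v 0 i := by
    intro k hk
    induction k with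
    | zero => intro i _; rfl
    | succ l ih =>
      intro i hi
      obtain ⟨j, hj, hstep⟩ := h.step l (by omega)
      rw [hstep, Function.update_of_ne (by omega), ih (by omega) i hi]
  intro k i hi
  rcases le_or_gt k n with hk | hk
  · exact key k hk i hi
  · rw [h.pad k (by omega)]; exact key n le_rfl i hi

theorem IsSimp.zero' {n p : ℕ} {v : ℕ → ℕ → ℕ} (h : IsSimp n p v) :
    ∀ k i, n ≤ i → v k i = 0 := fun k i hi => by
  rw [h.hi_const k i hi, h.zero i hi]

theorem IsSimp.grid' {n p : ℕ} {v : ℕ → ℕ → ℕ} (h : IsSimp n p v) :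
    ∀ k i, v k i ≤ p := by
  intro k i
  have h2 : v k i ≤ v (max k n) i := h.mono k _ i (le_max_left _ _)
  have h3 : v (max k n) i = v n i := by rw [h.pad _ (le_max_right _ _)]
  have := h.grid i
  omega

/-- coordinate sum within `range m` -/
def ssum (m : ℕ) (x : ℕ → ℕ) : ℕ := ∑ i ∈ Finset.range m, x i

theorem ssum_update (m : ℕ) (x : ℕ → ℕ) (i : ℕ) (hi : i < m) :
    ssum m (Function.update x i (x i + 1)) = ssum m x + 1 := by
  unfold ssum
  rw [Finset.sum_update_of_mem (Finset.mem_range.mpr hi)]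
  rw [← Finset.add_sum_erase _ x (Finset.mem_range.mpr hi), Finset.erase_eq]
  omega

theorem IsSimp.ssum_step {n p : ℕ} {v : ℕ → ℕ → ℕ} (h : IsSimp n p v) (m : ℕ)
    (hm : n ≤ m) : ∀ k ≤ n, ssum m (v k) = ssum m (v 0) + k := by
  intro k hk
  induction k with
  | zero => simp
  | succ l ih =>
    obtain ⟨j, hj, hstep⟩ := h.step l (by omega)
    rw [hstep, ssum_update m (v l) j (by omega), ih (by omega)]
    omega

end Kuhn

namespace Kuhn

/-- `w` is padded at index `n`: `w j = w (min j n)`. -/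
def Padded (n : ℕ) (w : ℕ → ℕ → ℕ) : Prop := ∀ j, w j = w (min j n)

/-- The face of an `(n+1)`-simplex `v` obtained by dropping vertex `k`,
as a chain of `n+1` vertices (indices `0..n`, padded at `n`). -/
def face (n k : ℕ) (v : ℕ → ℕ → ℕ) : ℕ → ℕ → ℕ :=
  fun j => if min j n < k then v (min j n) else v (min j n + 1)

/-- Insert vertex `x` at position `k` into the chain `w` of `n+1` vertices. -/
def ins (n k : ℕ) (x : ℕ → ℕ) (w : ℕ → ℕ → ℕ) : ℕ → ℕ → ℕ :=
  fun j => if j < k then w j else if min j (n+1) = k then x else w (min j (n+1) - 1)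

theorem face_padded (n k : ℕ) (v : ℕ → ℕ → ℕ) : Padded n (face n k v) := by
  intro j
  unfold face
  rw [min_assoc, min_self]

theorem face_apply_le (n k : ℕ) (v : ℕ → ℕ → ℕ) (j : ℕ) (hj : j ≤ n) :
    face n k v j = if j < k then v j else v (j+1) := by
  unfold face
  rw [min_eq_left hj]

theorem ins_face {n p k : ℕ} {v : ℕ → ℕ → ℕ} (h : IsSimp (n+1) p v) (hk : k ≤ n+1) :
    ins n k (v k) (face n k v) = v := by
  funext j
  unfold ins
  rcases lt_or_ge j k with hj | hj
  · rw [if_pos hj, face_apply_le n k v j (by omega), if_pos hj]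
  · rw [if_neg (by omega)]
    rcases eq_or_ne (min j (n+1)) k with he | he
    · rw [if_pos he]
      rcases le_or_gt j (n+1) with h1 | h1
      · rw [min_eq_left h1] at he; rw [he]
      · rw [min_eq_right (by omega)] at he
        rw [h.pad j (by omega), ← he]
    · rw [if_neg he]
      rcases le_or_gt j (n+1) with h1 | h1
      · rw [min_eq_left h1]
        have hjk : k < j := by rw [min_eq_left h1] at he; omega
        have hj1 : j - 1 ≤ n := by omega
        have hj2 : j - 1 + 1 = j := by omega
        rw [face_apply_le n k v (j-1) hj1, if_neg (by omega), hj2]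
      · rw [min_eq_right (by omega), h.pad j (by omega)]
        have hkn : k < n + 1 := by rw [min_eq_right (by omega : n + 1 ≤ j)] at he; omega
        simp only [Nat.add_sub_cancel]
        rw [face_apply_le n k v n (le_refl n), if_neg (by omega)]

theorem face_ins {n k : ℕ} {x : ℕ → ℕ} {w : ℕ → ℕ → ℕ} (hw : Padded n w) (hk : k ≤ n+1) :
    face n k (ins n k x w) = w := by
  funext j
  unfold face ins
  set m := min j n with hm
  have hmn : m ≤ n := min_le_right _ _
  rcases lt_or_ge m k with h1 | h1
  · rw [if_pos h1, if_pos h1, hw j]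
  · rw [if_neg (by omega), if_neg (by omega), if_neg (by
      rw [min_eq_left (by omega : m + 1 ≤ n + 1)]; omega)]
    rw [min_eq_left (by omega : m + 1 ≤ n + 1)]
    simp only [Nat.add_sub_cancel]
    rw [hw j]

end Kuhn

namespace Kuhn

open scoped Classical

/-- all labels `0..n` are attained on vertices `0..n` of the chain `v`. -/
def fullS (n : ℕ) (ℓ : (ℕ → ℕ) → ℕ) (v : ℕ → ℕ → ℕ) : Prop :=
  ∀ m ≤ n, ∃ k ≤ n, ℓ (v k) = m

/-- helper: in a finset, if the sum of a function bounded below by 1 equals the card,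
the function is constantly 1 -/
theorem sum_eq_card_all_one {α : Type*} (s : Finset α) (f : α → ℕ)
    (h1 : ∀ a ∈ s, 1 ≤ f a) (h2 : ∑ a ∈ s, f a = s.card) : ∀ a ∈ s, f a = 1 := by
  by_contra hcon
  push_neg at hcon
  obtain ⟨a, ha, hfa⟩ := hcon
  have : s.card = ∑ a ∈ s, 1 := by simp
  rw [this] at h2
  have hlt : ∑ a ∈ s, 1 < ∑ a ∈ s, f a :=
    Finset.sum_lt_sum h1 ⟨a, ha, by have := h1 a ha; omega⟩
  omega

theorem sum_eq_card_succ {α : Type*} [DecidableEq α] (s : Finset α) (f : α → ℕ)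
    (h1 : ∀ a ∈ s, 1 ≤ f a) (h2 : ∑ a ∈ s, f a = s.card + 1) :
    ∃ a ∈ s, f a = 2 ∧ ∀ b ∈ s, b ≠ a → f b = 1 := by
  have hex : ∃ a ∈ s, 2 ≤ f a := by
    by_contra hcon
    push_neg at hcon
    have : ∀ a ∈ s, f a = 1 := fun a ha => by have := h1 a ha; have := hcon a ha; omega
    rw [Finset.sum_congr rfl this] at h2
    simp at h2
  obtain ⟨a, ha, hfa⟩ := hex
  have key : ∀ b ∈ s, b ≠ a → f b = 1 := by
    intro b hb hba
    by_contra hfb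
    have hfb2 : 2 ≤ f b := by have := h1 b hb; omega
    have hbe : b ∈ s.erase a := Finset.mem_erase.mpr ⟨hba, hb⟩
    have e1 : ∑ x ∈ s, f x = f a + ∑ x ∈ s.erase a, f x :=
      (Finset.add_sum_erase s f ha).symm
    have e2 : ∑ x ∈ s.erase a, f x = f b + ∑ x ∈ (s.erase a).erase b, f x :=
      (Finset.add_sum_erase _ f hbe).symm
    have e3 : ((s.erase a).erase b).card ≤ ∑ x ∈ (s.erase a).erase b, f x := by
      rw [Finset.card_eq_sum_ones]
      exact Finset.sum_le_sum (fun x hx => h1 x (Finset.mem_of_mem_erase (Finset.mem_of_mem_erase hx)))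
    have c1 : (s.erase a).card = s.card - 1 := Finset.card_erase_of_mem ha
    have c2 : ((s.erase a).erase b).card = (s.erase a).card - 1 := Finset.card_erase_of_mem hbe
    have hcard : 1 ≤ s.card := Finset.card_pos.mpr ⟨a, ha⟩
    have hcard2 : 2 ≤ s.card := by
      have := Finset.one_lt_card.mpr ⟨a, ha, b, hb, fun h => hba h.symm⟩; omega
    omega
  refine ⟨a, ha, ?_, key⟩
  have e1 : ∑ x ∈ s, f x = f a + ∑ x ∈ s.erase a, f x := (Finset.add_sum_erase s f ha).symm
  have e2 : ∑ x ∈ s.erase a, f x = (s.erase a).card := by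
    rw [Finset.sum_congr rfl (fun b hb => key b (Finset.mem_of_mem_erase hb) (Finset.ne_of_mem_erase hb))]
    simp
  have c1 : (s.erase a).card = s.card - 1 := Finset.card_erase_of_mem ha
  have hcard : 1 ≤ s.card := Finset.card_pos.mpr ⟨a, ha⟩
  omega

/-- **L1, abstract form.** Parity of the number of "door" positions in a labelled chain. -/
theorem doors_parity (n : ℕ) (c : ℕ → ℕ) (hc : ∀ k ≤ n+1, c k ≤ n+1) :
    (((Finset.range (n+2)).filter
        (fun k => ∀ m ≤ n, ∃ j, j ≤ n+1 ∧ j ≠ k ∧ c j = m)).card : ZMod 2)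
      = if (∀ m ≤ n+1, ∃ k ≤ n+1, c k = m) then 1 else 0 := by
  set D := (Finset.range (n+2)).filter
      (fun k => ∀ m ≤ n, ∃ j, j ≤ n+1 ∧ j ≠ k ∧ c j = m) with hD
  by_cases hfull : ∀ m ≤ n+1, ∃ k ≤ n+1, c k = m
  · rw [if_pos hfull]
    have hsum : ∑ m ∈ Finset.range (n+2),
        ((Finset.range (n+2)).filter (fun k => c k = m)).card = n + 2 := by
      have := Finset.card_eq_sum_card_fiberwise (f := c) (s := Finset.range (n+2))
        (t := Finset.range (n+2)) (fun x hx => Finset.mem_range.mpr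
          (by have := hc x (Nat.lt_succ_iff.mp (Finset.mem_range.mp hx)); omega))
      rw [← this]; simp
    have hone : ∀ m ∈ Finset.range (n+2),
        ((Finset.range (n+2)).filter (fun k => c k = m)).card = 1 := by
      have hge : ∀ m ∈ Finset.range (n+2),
          1 ≤ ((Finset.range (n+2)).filter (fun k => c k = m)).card := by
        intro m hm
        obtain ⟨k, hk, hck⟩ := hfull m (Nat.lt_succ_iff.mp (Finset.mem_range.mp hm))
        exact Finset.card_pos.mpr ⟨k, Finset.mem_filter.mpr
          ⟨Finset.mem_range.mpr (by omega), hck⟩⟩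
      exact sum_eq_card_all_one _ _ hge (by rw [hsum]; simp)
    -- D = the fiber of n+1
    have hDeq : D = (Finset.range (n+2)).filter (fun k => c k = n+1) := by
      ext k
      simp only [hD, Finset.mem_filter, Finset.mem_range]
      constructor
      · rintro ⟨hk, hdoor⟩
        refine ⟨hk, ?_⟩
        by_contra hck
        have hckle : c k ≤ n := by have := hc k (by omega); omega
        obtain ⟨j, hj, hjk, hcj⟩ := hdoor (c k) hckle
        have h1 : ((Finset.range (n+2)).filter (fun x => c x = c k)).card = 1 :=
          hone _ (Finset.mem_range.mpr (by have := hc k (by omega); omega))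
        obtain ⟨a, hafib⟩ := Finset.card_eq_one.mp h1
        have hkm : k ∈ (Finset.range (n+2)).filter (fun x => c x = c k) :=
          Finset.mem_filter.mpr ⟨Finset.mem_range.mpr hk, rfl⟩
        have hjm : j ∈ (Finset.range (n+2)).filter (fun x => c x = c k) :=
          Finset.mem_filter.mpr ⟨Finset.mem_range.mpr (by omega), hcj⟩
        rw [hafib] at hkm hjm
        simp at hkm hjm
        exact hjk (by omega)
      · rintro ⟨hk, hck⟩
        refine ⟨hk, fun m hm => ?_⟩
        obtain ⟨j, hj, hcj⟩ := hfull m (by omega)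
        exact ⟨j, hj, fun hjk => by rw [hjk, hck] at hcj; omega, hcj⟩
    rw [hDeq, hone (n+1) (Finset.mem_range.mpr (by omega))]
    rfl
  · rw [if_neg hfull]
    push_neg at hfull
    obtain ⟨m0, hm0, hm0n⟩ := hfull
    by_cases hlow : ∀ m ≤ n, ∃ k ≤ n+1, c k = m
    · -- missing value must be n+1; exactly one duplicate
      have hm0top : m0 = n + 1 := by
        by_contra h
        obtain ⟨k, hk, hck⟩ := hlow m0 (by omega)
        exact hm0n k hk hck
      subst hm0top
      have hclow : ∀ k ≤ n+1, c k ≤ n := by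
        intro k hk
        have h1 := hc k hk
        have h2 := hm0n k hk
        omega
      have hsum : ∑ m ∈ Finset.range (n+1),
          ((Finset.range (n+2)).filter (fun k => c k = m)).card = n + 2 := by
        have := Finset.card_eq_sum_card_fiberwise (f := c) (s := Finset.range (n+2))
          (t := Finset.range (n+1)) (fun x hx => Finset.mem_range.mpr
            (by have := hclow x (Nat.lt_succ_iff.mp (Finset.mem_range.mp hx)); omega))
        rw [← this]; simp
      have hge : ∀ m ∈ Finset.range (n+1),
          1 ≤ ((Finset.range (n+2)).filter (fun k => c k = m)).card := by
        intro m hm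
        obtain ⟨k, hk, hck⟩ := hlow m (Nat.lt_succ_iff.mp (Finset.mem_range.mp hm))
        exact Finset.card_pos.mpr ⟨k, Finset.mem_filter.mpr
          ⟨Finset.mem_range.mpr (by omega), hck⟩⟩
      obtain ⟨mstar, hmstar, hm2, hrest⟩ := sum_eq_card_succ (Finset.range (n+1))
        (fun m => ((Finset.range (n+2)).filter (fun k => c k = m)).card) hge
        (by rw [hsum]; simp)
      have hDeq : D = (Finset.range (n+2)).filter (fun k => c k = mstar) := by
        ext k
        simp only [hD, Finset.mem_filter, Finset.mem_range]
        constructor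
        · rintro ⟨hk, hdoor⟩
          refine ⟨hk, ?_⟩
          by_contra hck
          have hckr : c k ∈ Finset.range (n+1) :=
            Finset.mem_range.mpr (by have := hclow k (by omega); omega)
          have h1 : ((Finset.range (n+2)).filter (fun x => c x = c k)).card = 1 :=
            hrest _ hckr hck
          obtain ⟨j, hj, hjk, hcj⟩ := hdoor (c k) (by have := hclow k (by omega); omega)
          obtain ⟨a, hafib⟩ := Finset.card_eq_one.mp h1
          have hkm : k ∈ (Finset.range (n+2)).filter (fun x => c x = c k) :=
            Finset.mem_filter.mpr ⟨Finset.mem_range.mpr hk, rfl⟩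
          have hjm : j ∈ (Finset.range (n+2)).filter (fun x => c x = c k) :=
            Finset.mem_filter.mpr ⟨Finset.mem_range.mpr (by omega), hcj⟩
          rw [hafib] at hkm hjm
          simp at hkm hjm
          exact hjk (by omega)
        · rintro ⟨hk, hck⟩
          refine ⟨hk, fun m hm => ?_⟩
          rcases eq_or_ne m mstar with rfl | hmm
          · -- pick the other element of the duplicate fiber
            obtain ⟨a, b, hab, hfib⟩ := Finset.card_eq_two.mp hm2
            have hkm : k ∈ (Finset.range (n+2)).filter (fun x => c x = m) :=
              Finset.mem_filter.mpr ⟨Finset.mem_range.mpr hk, hck⟩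
            rw [hfib] at hkm
            simp at hkm
            rcases hkm with rfl | rfl
            · have hbm : b ∈ (Finset.range (n+2)).filter (fun x => c x = m) := by
                rw [hfib]; simp
              have := Finset.mem_filter.mp hbm
              exact ⟨b, Nat.lt_succ_iff.mp (Finset.mem_range.mp this.1),
                fun h => hab h.symm, this.2⟩
            · have hbm : a ∈ (Finset.range (n+2)).filter (fun x => c x = m) := by
                rw [hfib]; simp
              have := Finset.mem_filter.mp hbm
              exact ⟨a, Nat.lt_succ_iff.mp (Finset.mem_range.mp this.1),
                fun h => hab h, this.2⟩
          · obtain ⟨j, hj, hcj⟩ := hlow m hm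
            exact ⟨j, hj, fun hjk => by rw [hjk, hck] at hcj; exact hmm hcj.symm, hcj⟩
      rw [hDeq, hm2]
      rfl
    · -- some low value missing entirely: no doors at all
      push_neg at hlow
      obtain ⟨m1, hm1, hm1n⟩ := hlow
      have hDeq : D = ∅ := by
        rw [Finset.eq_empty_iff_forall_notMem]
        intro k hk
        obtain ⟨j, hj, hjk, hcj⟩ := (Finset.mem_filter.mp hk).2 m1 hm1
        exact hm1n j hj hcj
      rw [hDeq]
      rfl

end Kuhn

namespace Kuhn
open scoped Classical

theorem fullS_face_iff {n p k : ℕ} {v : ℕ → ℕ → ℕ} {ℓ : (ℕ → ℕ) → ℕ}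
    (h : IsSimp (n+1) p v) (hk : k ≤ n+1) :
    fullS n ℓ (face n k v) ↔ ∀ m ≤ n, ∃ j, j ≤ n+1 ∧ j ≠ k ∧ ℓ (v j) = m := by
  constructor
  · intro hf m hm
    obtain ⟨j, hj, hlj⟩ := hf m hm
    rw [face_apply_le n k v j hj] at hlj
    by_cases hjk : j < k
    · rw [if_pos hjk] at hlj
      exact ⟨j, by omega, by omega, hlj⟩
    · rw [if_neg hjk] at hlj
      exact ⟨j+1, by omega, by omega, hlj⟩
  · intro hf m hm
    obtain ⟨j, hj, hjk, hlj⟩ := hf m hm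
    by_cases hjk' : j < k
    · refine ⟨j, by omega, ?_⟩
      rw [face_apply_le n k v j (by omega), if_pos hjk']
      exact hlj
    · refine ⟨j - 1, by omega, ?_⟩
      have hkj : k < j := by omega
      rw [face_apply_le n k v (j-1) (by omega), if_neg (by omega)]
      have : j - 1 + 1 = j := by omega
      rw [this]
      exact hlj

/-- **L1.** -/
theorem L1 {n p : ℕ} {v : ℕ → ℕ → ℕ} {ℓ : (ℕ → ℕ) → ℕ}
    (h : IsSimp (n+1) p v) (h0 : ∀ x i, x i = 0 → ℓ x ≤ i) :
    (((Finset.range (n+2)).filter (fun k => fullS n ℓ (face n k v))).card : ZMod 2)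
      = if fullS (n+1) ℓ v then 1 else 0 := by
  have hc : ∀ k ≤ n+1, ℓ (v k) ≤ n+1 := fun k hk =>
    h0 (v k) (n+1) (h.zero' k (n+1) le_rfl)
  have hfe : (Finset.range (n+2)).filter (fun k => fullS n ℓ (face n k v))
      = (Finset.range (n+2)).filter
        (fun k => ∀ m ≤ n, ∃ j, j ≤ n+1 ∧ j ≠ k ∧ (fun q => ℓ (v q)) j = m) := by
    apply Finset.filter_congr
    intro k hk
    have := fullS_face_iff (ℓ := ℓ) h (Nat.lt_succ_iff.mp (Finset.mem_range.mp hk))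
    simp only [this]
  rw [hfe, doors_parity n (fun q => ℓ (v q)) hc]
  unfold fullS
  congr 1

end Kuhn

namespace Kuhn
open scoped Classical

theorem IsSimp.stepw {n p : ℕ} {v : ℕ → ℕ → ℕ} (h : IsSimp n p v) (k : ℕ) (hk : k < n) :
    ∃ s < n, ∀ i, v (k+1) i = v k i + if i = s then 1 else 0 := by
  obtain ⟨s, hs, hstep⟩ := h.step k hk
  refine ⟨s, hs, fun i => ?_⟩
  rw [hstep, Function.update_apply]
  split <;> simp_all

section Fiber

variable {n p : ℕ} {v0 : ℕ → ℕ → ℕ} {k0 : ℕ}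

theorem w_zero (h : IsSimp (n+1) p v0) (hk0 : k0 ≤ n+1) :
    ∀ j i, n+1 ≤ i → face n k0 v0 j i = 0 := by
  intro j i hi
  rw [face_padded n k0 v0 j, face_apply_le n k0 v0 _ (min_le_right _ _)]
  split <;> exact h.zero' _ i hi

theorem w_grid (h : IsSimp (n+1) p v0) (hk0 : k0 ≤ n+1) :
    ∀ j i, face n k0 v0 j i ≤ p := by
  intro j i
  rw [face_padded n k0 v0 j, face_apply_le n k0 v0 _ (min_le_right _ _)]
  split <;> exact h.grid' _ i

theorem w_mono (h : IsSimp (n+1) p v0) (hk0 : k0 ≤ n+1) :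
    ∀ j j' i, j ≤ j' → face n k0 v0 j i ≤ face n k0 v0 j' i := by
  intro j j' i hjj
  rw [face_padded n k0 v0 j, face_padded n k0 v0 j',
    face_apply_le n k0 v0 _ (min_le_right _ _), face_apply_le n k0 v0 _ (min_le_right _ _)]
  have hm : min j n ≤ min j' n := by omega
  split <;> split <;> apply h.mono <;> omega

theorem w_ssum (h : IsSimp (n+1) p v0) (hk0 : k0 ≤ n+1) :
    ∀ j ≤ n, ssum (n+1) (face n k0 v0 j)
      = ssum (n+1) (v0 0) + j + (if j < k0 then 0 else 1) := by
  intro j hj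
  rw [face_apply_le n k0 v0 j hj]
  split
  · rw [h.ssum_step (n+1) le_rfl j (by omega)]; omega
  · rw [h.ssum_step (n+1) le_rfl (j+1) (by omega)]; omega

/-- the vertices of a simplex `v` with `face n k v = w` agree with `w` off `k`. -/
theorem fib_vertex_lt {v : ℕ → ℕ → ℕ} {k : ℕ} (hk : k ≤ n+1)
    (hf : face n k v = face n k0 v0) :
    ∀ j, j < k → v j = face n k0 v0 j := by
  intro j hj
  rw [← hf, face_apply_le n k v j (by omega), if_pos hj]

theorem fib_vertex_gt {v : ℕ → ℕ → ℕ} {k : ℕ} (hk : k ≤ n+1)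
    (hf : face n k v = face n k0 v0) :
    ∀ j, k < j → j ≤ n+1 → v j = face n k0 v0 (j-1) := by
  intro j hj hj2
  have hj3 : j - 1 + 1 = j := by omega
  rw [← hf, face_apply_le n k v (j-1) (by omega), if_neg (by omega), hj3]

/-- interior drop positions are read off from coordinate sums, hence shared
by any two witnesses. -/
theorem fib_k_unique {v v' : ℕ → ℕ → ℕ} {k k' j : ℕ} (hv : IsSimp (n+1) p v)
    (hv' : IsSimp (n+1) p v') (hk : k ≤ n+1) (hk' : k' ≤ n+1)
    (hf : face n k v = face n k0 v0) (hf' : face n k' v' = face n k0 v0)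
    (hj1 : 1 ≤ j) (hj2 : j ≤ n) (hkj : k = j) : k' = j := by
  have e1 := w_ssum (k0 := k) hv hk j hj2
  have e2 := w_ssum (k0 := k) hv hk (j-1) (by omega)
  have e1' := w_ssum (k0 := k') hv' hk' j hj2
  have e2' := w_ssum (k0 := k') hv' hk' (j-1) (by omega)
  rw [hf] at e1 e2
  rw [hf'] at e1' e2'
  by_contra hne
  rw [if_neg (by omega)] at e1
  rw [if_pos (by omega)] at e2
  rcases lt_or_gt_of_ne hne with hlt | hgt
  · rw [if_neg (by omega)] at e1'
    rw [if_neg (by omega)] at e2'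
    omega
  · rw [if_pos (by omega)] at e1'
    rw [if_pos (by omega)] at e2'
    omega

end Fiber
end Kuhn

namespace Kuhn
open scoped Classical

theorem eq_update_of_pointwise {f g : ℕ → ℕ} {s : ℕ}
    (h : ∀ i, g i = f i + if i = s then 1 else 0) :
    g = Function.update f s (f s + 1) := by
  funext i
  rw [Function.update_apply, h i]
  split <;> simp_all

section CaseB

variable {n p : ℕ} {v0 : ℕ → ℕ → ℕ} {k0 : ℕ}

/-- **Case B**: interior drop position. The fiber is a 2-element set and the face
is not an `n`-simplex. -/
theorem fiber_caseB (h : IsSimp (n+1) p v0) (hk1 : 1 ≤ k0) (hk2 : k0 ≤ n) :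
    (∃ q1 q2 : (ℕ → ℕ → ℕ) × ℕ, q1 ≠ q2 ∧
      {q : (ℕ → ℕ → ℕ) × ℕ | IsSimp (n+1) p q.1 ∧ q.2 ≤ n+1 ∧
          face n q.2 q.1 = face n k0 v0} = {q1, q2}) ∧
      ¬ IsSimp n p (face n k0 v0) := by
  have hk3 : k0 - 1 + 1 = k0 := by omega
  obtain ⟨a, ha, hsa⟩ := h.stepw (k0-1) (by omega)
  rw [hk3] at hsa
  obtain ⟨b, hb, hsb⟩ := h.stepw k0 (by omega)
  have hab : a ≠ b := by
    intro hab
    subst hab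
    have h1 := hsa a
    have h2 := hsb a
    have h3 := h.complete a ha
    have h4 := h.mono (k0+1) (n+1) a (by omega)
    have h5 := h.mono 0 (k0-1) a (by omega)
    simp at h1 h2
    omega
  -- the alternative middle vertex
  set x' : ℕ → ℕ := fun i => v0 (k0-1) i + if i = b then 1 else 0 with hx'
  set v1 : ℕ → ℕ → ℕ := fun j => if j = k0 then x' else v0 j with hv1
  have hv1ne : ∀ j, j ≠ k0 → v1 j = v0 j := by
    intro j hj; simp only [hv1, if_neg hj]
  have hv1k : v1 k0 = x' := by simp [hv1]
  -- `v1` is a simplex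
  have hv1simp : IsSimp (n+1) p v1 := by
    constructor
    · intro k hk
      rcases eq_or_ne (k+1) k0 with he | he
      · refine ⟨b, hb, ?_⟩
        rw [he, hv1k, hv1ne k (by omega)]
        apply eq_update_of_pointwise
        intro i
        simp only [hx']
        have : k = k0 - 1 := by omega
        rw [this]
      · rcases eq_or_ne k k0 with he2 | he2
        · refine ⟨a, ha, ?_⟩
          rw [hv1ne (k+1) he, he2, hv1k]
          apply eq_update_of_pointwise
          intro i
          have h1 := hsa i
          have h2 := hsb i
          simp only [hx']
          rcases eq_or_ne i a with rfl | hia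
          · rw [if_pos rfl, if_neg hab]
            rw [if_pos rfl] at h1
            rw [if_neg (fun hh => hab hh)] at h2
            omega
          · rw [if_neg hia]
            rw [if_neg hia] at h1
            rcases eq_or_ne i b with rfl | hib
            · rw [if_pos rfl]
              rw [if_pos rfl] at h2
              omega
            · rw [if_neg hib]
              rw [if_neg hib] at h2
              omega
        · rw [hv1ne (k+1) he, hv1ne k he2]
          exact h.step k hk
    · intro i hi
      rw [hv1ne (n+1) (by omega), hv1ne 0 (by omega)]
      exact h.complete i hi
    · intro i hi
      rw [hv1ne 0 (by omega)]
      exact h.zero i hi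
    · intro i
      rw [hv1ne (n+1) (by omega)]
      exact h.grid i
    · intro k hk
      rw [hv1ne (n+1) (by omega), hv1ne k (by omega)]
      exact h.pad k hk
  have hv1face : face n k0 v1 = face n k0 v0 := by
    funext j i
    rw [face_padded n k0 v1 j, face_padded n k0 v0 j]
    rw [face_apply_le n k0 v1 _ (min_le_right _ _), face_apply_le n k0 v0 _ (min_le_right _ _)]
    split
    · rw [hv1ne _ (by omega)]
    · rw [hv1ne _ (by omega)]
  have hv1nev0 : v1 ≠ v0 := by
    intro hcon
    have h1 : v1 k0 a = v0 k0 a := by rw [hcon]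
    rw [hv1k] at h1
    simp only [hx'] at h1
    have h2 := hsa a
    simp at h2
    rw [if_neg hab] at h1
    omega
  constructor
  · refine ⟨(v0, k0), (v1, k0), ?_, ?_⟩
    · intro hcon
      exact hv1nev0 (congrArg Prod.fst hcon).symm
    · ext ⟨v, k⟩
      simp only [Set.mem_setOf_eq, Set.mem_insert_iff, Set.mem_singleton_iff, Prod.mk.injEq]
      constructor
      · rintro ⟨hv, hk, hf⟩
        have hkk0 : k = k0 :=
          fib_k_unique (k0 := k0) (v0 := v0) h hv (by omega) hk rfl hf hk1 hk2 rfl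
        rw [hkk0] at hf
        -- v agrees with v0 off k0
        have hvj : ∀ j, j ≠ k0 → v j = v0 j := by
          intro j hj
          rcases lt_or_gt_of_ne hj with hlt | hgt
          · rw [fib_vertex_lt (k0 := k0) (v0 := v0) (by omega) hf j hlt,
              face_apply_le n k0 v0 j (by omega), if_pos hlt]
          · rcases le_or_gt j (n+1) with hj2 | hj2
            · have hj4 : j - 1 + 1 = j := by omega
              rw [fib_vertex_gt (k0 := k0) (v0 := v0) (by omega) hf j hgt hj2,
                face_apply_le n k0 v0 (j-1) (by omega), if_neg (by omega), hj4]
            · rw [hv.pad j (by omega), h.pad j (by omega)]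
              have h5 := fib_vertex_gt (k0 := k0) (v0 := v0) (by omega) hf (n+1) (by omega) le_rfl
              have hj5 : n + 1 - 1 = n := by omega
              rw [hj5] at h5
              rw [h5, face_apply_le n k0 v0 n (by omega), if_neg (by omega)]
        -- v k0 is one of the two middle vertices
        obtain ⟨s, hs, hss⟩ := hv.stepw (k0-1) (by omega)
        rw [hk3] at hss
        obtain ⟨t, ht, hst⟩ := hv.stepw k0 (by omega)
        have hvk1 : v (k0-1) = v0 (k0-1) := hvj _ (by omega)
        have hvk2 : v (k0+1) = v0 (k0+1) := hvj _ (by omega)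
        have hkey : ∀ i, v0 (k0-1) i + ((if i = s then 1 else 0) + (if i = t then 1 else 0))
            = v0 (k0-1) i + ((if i = a then 1 else 0) + (if i = b then 1 else 0)) := by
          intro i
          have h1 := hss i
          have h2 := hst i
          have h3 := hsa i
          have h4 := hsb i
          rw [hvk1] at h1
          rw [hvk2] at h2
          omega
        have hor : v k0 = v0 k0 ∨ v k0 = x' := by
          have hsor : s = a ∨ s = b := by
            have h5 := hkey s
            by_contra hcon
            push_neg at hcon
            rw [if_neg hcon.1, if_neg hcon.2, if_pos rfl] at h5
            rcases eq_or_ne s t with rfl | hstne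
            · simp at h5
            · rw [if_neg (fun hh : s = t => hstne hh)] at h5
              omega
          rcases hsor with rfl | rfl
          · left
            funext i
            have h1 := hss i
            have h3 := hsa i
            rw [hvk1] at h1
            omega
          · right
            funext i
            have h1 := hss i
            rw [hvk1] at h1
            simp only [hx']
            omega
        rcases hor with hvv | hvv
        · left
          refine ⟨?_, hkk0⟩
          funext j
          rcases eq_or_ne j k0 with rfl | hj
          · exact hvv
          · exact hvj j hj
        · right
          refine ⟨?_, hkk0⟩
          funext j
          rcases eq_or_ne j k0 with rfl | hj
          · rw [hvv, hv1k]
          · rw [hvj j hj, hv1ne j hj]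
      · rintro (⟨rfl, rfl⟩ | ⟨rfl, rfl⟩)
        · exact ⟨h, by omega, rfl⟩
        · exact ⟨hv1simp, by omega, hv1face⟩
  · -- the face is not an n-simplex : its (k0-1)-st step is a double step
    intro hw
    obtain ⟨s, hs, hws⟩ := hw.stepw (k0-1) (by omega)
    rw [hk3] at hws
    have hwk1 : face n k0 v0 (k0-1) = v0 (k0-1) := by
      rw [face_apply_le n k0 v0 (k0-1) (by omega), if_pos (by omega)]
    have hwk2 : face n k0 v0 k0 = v0 (k0+1) := by
      rw [face_apply_le n k0 v0 k0 (by omega), if_neg (by omega)]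
    have h1 := hws a
    have h2 := hws b
    rw [hwk1, hwk2] at h1 h2
    have h3 := hsa a
    have h4 := hsb a
    have h5 := hsa b
    have h6 := hsb b
    simp at h3 h6
    rw [if_neg (fun hh : b = a => hab hh.symm)] at h5
    rw [if_neg hab] at h4
    rcases eq_or_ne a s with rfl | hna
    · rw [if_pos rfl] at h1
      rw [if_neg (fun hh : b = a => hab hh.symm)] at h2
      omega
    · rw [if_neg hna] at h1
      omega

end CaseB
end Kuhn

namespace Kuhn
open scoped Classical

section CaseA

variable {n p : ℕ}

theorem fib_vertex_lt' {v w : ℕ → ℕ → ℕ} {k : ℕ} (hk : k ≤ n+1)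
    (hf : face n k v = w) : ∀ j, j < k → v j = w j := by
  intro j hj
  rw [← hf, face_apply_le n k v j (by omega), if_pos hj]

theorem fib_vertex_gt' {v w : ℕ → ℕ → ℕ} {k : ℕ} (hk : k ≤ n+1)
    (hf : face n k v = w) : ∀ j, k < j → j ≤ n+1 → v j = w (j-1) := by
  intro j hj hj2
  have hj3 : j - 1 + 1 = j := by omega
  rw [← hf, face_apply_le n k v (j-1) (by omega), if_neg (by omega), hj3]

/-- **Case A**: all steps of the face `w` are unit steps. Classification of the fiber. -/
theorem fiber_caseA (hp : 1 ≤ p) {w : ℕ → ℕ → ℕ} {istar : ℕ} (histar : istar < n+1)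
    (hWz : ∀ j i, n+1 ≤ i → w j i = 0)
    (hWg : ∀ j i, w j i ≤ p)
    (hWm : ∀ j j' i, j ≤ j' → w j i ≤ w j' i)
    (hWp : Padded n w)
    (hsig : ∃ s0, ∀ j ≤ n, ssum (n+1) (w j) = s0 + j)
    (hstar : ∀ i < n+1, w n i + (if i = istar then 1 else 0) = w 0 i + 1)
    (hwstep : ∀ j < n, ∃ s < n+1, ∀ i, w (j+1) i = w j i + (if i = s then 1 else 0))
    (ℓ : (ℕ → ℕ) → ℕ) (hfull : fullS n ℓ w)
    (h0 : ∀ x i, x i = 0 → ℓ x ≤ i)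
    (hpp : ∀ x i, i < n+1 → x i = p → ℓ x ≠ i) :
    (∃ q1 q2 : (ℕ → ℕ → ℕ) × ℕ, q1 ≠ q2 ∧
      {q : (ℕ → ℕ → ℕ) × ℕ | IsSimp (n+1) p q.1 ∧ q.2 ≤ n+1 ∧ face n q.2 q.1 = w} = {q1, q2}
      ∧ ¬ IsSimp n p w) ∨
    (∃ q1 : (ℕ → ℕ → ℕ) × ℕ,
      {q : (ℕ → ℕ → ℕ) × ℕ | IsSimp (n+1) p q.1 ∧ q.2 ≤ n+1 ∧ face n q.2 q.1 = w} = {q1}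
      ∧ IsSimp n p w) := by
  have wconst : ∀ j ≤ n, w j istar = w 0 istar := by
    intro j hj
    have h1 := hstar istar
    rw [if_pos rfl] at h1
    have h2 := hWm 0 j istar (by omega)
    have h3 := hWm j n istar hj
    have h4 := h1 histar
    omega
  set xP : ℕ → ℕ := fun i => w 0 i - if i = istar then 1 else 0 with hxP
  set vP : ℕ → ℕ → ℕ := fun j => if j = 0 then xP else w (j-1) with hvP
  set xQ : ℕ → ℕ := fun i => w n i + if i = istar then 1 else 0 with hxQ
  set vQ : ℕ → ℕ → ℕ := fun j => if j ≤ n then w j else xQ with hvQ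
  have hvP0 : vP 0 = xP := by simp [hvP]
  have hvPj : ∀ j, 1 ≤ j → vP j = w (j-1) := by
    intro j hj; simp only [hvP, if_neg (by omega : ¬ j = 0)]
  have hvQj : ∀ j, j ≤ n → vQ j = w j := by
    intro j hj; simp only [hvQ, if_pos hj]
  have hvQt : ∀ j, n < j → vQ j = xQ := by
    intro j hj; simp only [hvQ, if_neg (by omega : ¬ j ≤ n)]
  -- membership of the two candidates
  have hPmem : 1 ≤ w 0 istar → IsSimp (n+1) p vP ∧ face n 0 vP = w := by
    intro hc
    constructor
    · constructor
      · intro k hk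
        rcases Nat.eq_zero_or_pos k with rfl | hkpos
        · refine ⟨istar, histar, ?_⟩
          rw [hvPj 1 le_rfl, hvP0]
          apply eq_update_of_pointwise
          intro i
          simp only [hxP, Nat.sub_self]
          rcases eq_or_ne i istar with rfl | hi
          · simp only [if_pos rfl, if_true]
            omega
          · simp only [if_neg hi]
            omega
        · obtain ⟨s, hs, hss⟩ := hwstep (k-1) (by omega)
          refine ⟨s, hs, ?_⟩
          rw [hvPj (k+1) (by omega), hvPj k (by omega)]
          have he : k + 1 - 1 = k - 1 + 1 := by omega
          rw [he]
          exact eq_update_of_pointwise (hss)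
      · intro i hi
        rw [hvPj (n+1) (by omega), hvP0]
        simp only [hxP, Nat.add_sub_cancel]
        have h1 := hstar i hi
        rcases eq_or_ne i istar with rfl | hne
        · rw [if_pos rfl] at h1 ⊢
          omega
        · rw [if_neg hne] at h1 ⊢
          omega
      · intro i hi
        rw [hvP0]
        simp only [hxP]
        rw [hWz 0 i hi, if_neg (by omega : ¬ i = istar)]
      · intro i
        rw [hvPj (n+1) (by omega)]
        simp only [Nat.add_sub_cancel]
        exact hWg n i
      · intro k hk
        rw [hvPj k (by omega), hvPj (n+1) (by omega)]
        simp only [Nat.add_sub_cancel]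
        rw [hWp (k-1), show min (k-1) n = n from by omega]
    · funext j
      have h1 : ¬ (min j n < 0) := by omega
      unfold face
      simp only [if_neg h1]
      rw [hvPj (min j n + 1) (by omega)]
      simp only [Nat.add_sub_cancel]
      exact (hWp j).symm
  have hQmem : w 0 istar < p → IsSimp (n+1) p vQ ∧ face n (n+1) vQ = w := by
    intro hc
    have hcn : w n istar < p := by rw [wconst n le_rfl]; exact hc
    constructor
    · constructor
      · intro k hk
        rcases eq_or_ne n k with rfl | hkn
        · refine ⟨istar, histar, ?_⟩
          rw [hvQt (n+1) (by omega), hvQj n le_rfl]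
          apply eq_update_of_pointwise
          intro i
          simp only [hxQ]
        · obtain ⟨s, hs, hss⟩ := hwstep k (by omega)
          refine ⟨s, hs, ?_⟩
          rw [hvQj (k+1) (by omega), hvQj k (by omega)]
          exact eq_update_of_pointwise hss
      · intro i hi
        rw [hvQt (n+1) (by omega), hvQj 0 (by omega)]
        simp only [hxQ]
        exact hstar i hi
      · intro i hi
        rw [hvQj 0 (by omega)]
        exact hWz 0 i hi
      · intro i
        rw [hvQt (n+1) (by omega)]
        simp only [hxQ]
        rcases eq_or_ne i istar with rfl | hne
        · rw [if_pos rfl]; omega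
        · rw [if_neg hne]
          have := hWg n i
          omega
      · intro k hk
        rw [hvQt k (by omega), hvQt (n+1) (by omega)]
    · funext j
      have h1 : min j n < n + 1 := by omega
      unfold face
      simp only [if_pos h1]
      rw [hvQj (min j n) (min_le_right _ _)]
      exact (hWp j).symm
  -- forward direction: any member is one of the candidates
  have hfwd : ∀ v k, IsSimp (n+1) p v → k ≤ n+1 → face n k v = w →
      (k = 0 ∧ 1 ≤ w 0 istar ∧ v = vP) ∨ (k = n+1 ∧ w 0 istar < p ∧ v = vQ) := by
    intro v k hv hk hf
    obtain ⟨s0, hs0⟩ := hsig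
    have hk01 : k = 0 ∨ k = n+1 := by
      by_contra hcon
      push_neg at hcon
      have hk1 : 1 ≤ k := by omega
      have hk2 : k ≤ n := by omega
      have e1 := w_ssum (k0 := k) hv hk k hk2
      have e2 := w_ssum (k0 := k) hv hk (k-1) (by omega)
      rw [hf] at e1 e2
      rw [hs0 k hk2, hs0 (k-1) (by omega)] at *
      rw [if_neg (by omega)] at e1
      rw [if_pos (by omega)] at e2
      omega
    rcases hk01 with rfl | rfl
    · left
      obtain ⟨s, hs, hss⟩ := hv.stepw 0 (by omega)
      have hv1 : v 1 = w 0 := fib_vertex_gt' (by omega) hf 1 (by omega) (by omega)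
      have hvn : v (n+1) = w n := by
        have := fib_vertex_gt' (n := n) (by omega) hf (n+1) (by omega) le_rfl
        simpa using this
      -- s = istar
      have hsi : s = istar := by
        have h1 : v 1 istar = v 0 istar + if istar = s then 1 else 0 := by
          simpa using hss istar
        have h2 := hv.complete istar histar
        have h3 := hstar istar histar
        rw [hv1] at h1
        rw [hvn] at h2
        simp only [if_pos rfl, if_true] at h3
        by_contra hcon
        rw [if_neg (fun hh : istar = s => hcon hh.symm)] at h1
        omega
      rw [hsi] at hss
      have hc : 1 ≤ w 0 istar := by
        have h1 : v 1 istar = v 0 istar + if istar = istar then 1 else 0 := by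
          simpa using hss istar
        rw [hv1] at h1
        simp at h1
        omega
      refine ⟨rfl, hc, ?_⟩
      funext j
      rcases Nat.eq_zero_or_pos j with rfl | hj
      · rw [hvP0]
        funext i
        simp only [hxP]
        rcases lt_or_ge i (n+1) with hi | hi
        · have h1 : v 1 i = v 0 i + if i = istar then 1 else 0 := by
            simpa using hss i
          rw [hv1] at h1
          omega
        · rw [hv.zero i hi, hWz 0 i hi]
          simp
      · rcases le_or_gt j (n+1) with hj2 | hj2
        · rw [fib_vertex_gt' (by omega) hf j (by omega) hj2, hvPj j (by omega)]
        · rw [hv.pad j (by omega), hvn, hvPj j (by omega)]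
          rw [hWp (j-1), show min (j-1) n = n from by omega]
    · right
      obtain ⟨s, hs, hss⟩ := hv.stepw n (by omega)
      have hvj : ∀ j, j ≤ n → v j = w j := by
        intro j hj
        exact fib_vertex_lt' le_rfl hf j (by omega)
      have hsi : s = istar := by
        have h1 := hss istar
        have h2 := hv.complete istar histar
        have h3 := hstar istar histar
        rw [hvj n le_rfl] at h1
        rw [hvj 0 (by omega)] at h2
        simp only [if_pos rfl, if_true] at h3
        by_contra hcon
        rw [if_neg (fun hh : istar = s => hcon hh.symm)] at h1
        omega
      rw [hsi] at hss
      have hc : w 0 istar < p := by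
        have h1 := hss istar
        rw [hvj n le_rfl] at h1
        simp only [if_pos rfl, if_true] at h1
        have h2 := hv.grid istar
        have h3 := wconst n le_rfl
        omega
      refine ⟨rfl, hc, ?_⟩
      funext j
      rcases le_or_gt j n with hj | hj
      · rw [hvj j hj, hvQj j hj]
      · rw [hvQt j hj, hv.pad j (by omega)]
        rcases eq_or_ne j (n+1) with rfl | hne
        · funext i
          have h1 := hss i
          rw [hvj n le_rfl] at h1
          simp only [hxQ]
          omega
        · funext i
          have h1 := hss i
          rw [hvj n le_rfl] at h1
          simp only [hxQ]
          omega
  -- label conditions exclude the top face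
  have hnotp : w 0 istar ≠ p := by
    intro hcp
    obtain ⟨j, hj, hlj⟩ := hfull istar (by omega)
    exact hpp (w j) istar histar (by rw [wconst j hj, hcp]) hlj
  rcases Nat.eq_zero_or_pos (w 0 istar) with hc0 | hcpos
  · -- boundary door: singleton fiber, and `w` is an `n`-simplex
    have histn : istar = n := by
      obtain ⟨j, hj, hlj⟩ := hfull n le_rfl
      have h1 := h0 (w j) istar (by rw [wconst j hj, hc0])
      omega
    right
    refine ⟨(vQ, n+1), ?_, ?_⟩
    · ext ⟨v, k⟩
      simp only [Set.mem_setOf_eq, Set.mem_singleton_iff, Prod.mk.injEq]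
      constructor
      · rintro ⟨hv, hk, hf⟩
        rcases hfwd v k hv hk hf with ⟨_, hc, _⟩ | ⟨hk', hc, hv'⟩
        · omega
        · exact ⟨hv', hk'⟩
      · rintro ⟨rfl, rfl⟩
        obtain ⟨h1, h2⟩ := hQmem (by omega)
        exact ⟨h1, le_rfl, h2⟩
    · -- `w` is an `n`-simplex
      constructor
      · intro j hj
        obtain ⟨s, hs, hss⟩ := hwstep j hj
        have hsn : s ≠ istar := by
          intro hcon
          have h1 := hss istar
          rw [wconst (j+1) (by omega), wconst j (by omega),
            if_pos hcon.symm] at h1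
          omega
        exact ⟨s, by omega, eq_update_of_pointwise hss⟩
      · intro i hi
        have h1 := hstar i (by omega)
        rw [if_neg (by omega)] at h1
        omega
      · intro i hi
        rcases eq_or_ne i n with rfl | hne
        · rw [← histn]; exact hc0
        · exact hWz 0 i (by omega)
      · intro i
        exact hWg n i
      · intro k hk
        rw [hWp k, min_eq_right hk]
  · -- interior: two-element fiber, and `w` is not an `n`-simplex
    left
    have hcp : w 0 istar < p := by
      have := hWg 0 istar
      omega
    refine ⟨(vP, 0), (vQ, n+1), ?_, ?_, ?_⟩
    · intro hcon
      have := congrArg Prod.snd hcon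
      simp at this
    · ext ⟨v, k⟩
      simp only [Set.mem_setOf_eq, Set.mem_insert_iff, Set.mem_singleton_iff, Prod.mk.injEq]
      constructor
      · rintro ⟨hv, hk, hf⟩
        rcases hfwd v k hv hk hf with ⟨hk', _, hv'⟩ | ⟨hk', _, hv'⟩
        · left; exact ⟨hv', hk'⟩
        · right; exact ⟨hv', hk'⟩
      · rintro (⟨rfl, rfl⟩ | ⟨rfl, rfl⟩)
        · obtain ⟨h1, h2⟩ := hPmem hcpos
          exact ⟨h1, by omega, h2⟩
        · obtain ⟨h1, h2⟩ := hQmem hcp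
          exact ⟨h1, le_rfl, h2⟩
    · intro hw
      rcases eq_or_ne istar n with rfl | hne
      · have := hw.zero istar le_rfl
        omega
      · have h1 := hw.complete istar (by omega)
        have h2 := hstar istar histar
        rw [if_pos rfl] at h2
        omega

end CaseA
end Kuhn

namespace Kuhn
open scoped Classical

variable {n p : ℕ}

/-- derive the case-A data from an endpoint witness -/
theorem caseA_package {v0 : ℕ → ℕ → ℕ} {k0 : ℕ} (h : IsSimp (n+1) p v0)
    (hk0 : k0 = 0 ∨ k0 = n+1) :
    ∃ istar < n+1,
      (∀ i < n+1, face n k0 v0 n i + (if i = istar then 1 else 0) = face n k0 v0 0 i + 1) ∧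
      (∀ j < n, ∃ s < n+1, ∀ i,
        face n k0 v0 (j+1) i = face n k0 v0 j i + (if i = s then 1 else 0)) := by
  rcases hk0 with rfl | rfl
  · have hw : ∀ j, j ≤ n → face n 0 v0 j = v0 (j+1) := by
      intro j hj
      rw [face_apply_le n 0 v0 j hj, if_neg (by omega)]
    obtain ⟨istar, hi, hss⟩ := h.stepw 0 (by omega)
    refine ⟨istar, hi, ?_, ?_⟩
    · intro i hi2
      rw [hw n le_rfl, hw 0 (by omega)]
      have h1 : v0 1 i = v0 0 i + if i = istar then 1 else 0 := by simpa using hss i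
      have h2 := h.complete i hi2
      simp only [Nat.zero_add]
      omega
    · intro j hj
      obtain ⟨s, hs, hss'⟩ := h.stepw (j+1) (by omega)
      refine ⟨s, hs, fun i => ?_⟩
      rw [hw (j+1) (by omega), hw j (by omega)]
      exact hss' i
  · have hw : ∀ j, j ≤ n → face n (n+1) v0 j = v0 j := by
      intro j hj
      rw [face_apply_le n (n+1) v0 j hj, if_pos (by omega)]
    obtain ⟨istar, hi, hss⟩ := h.stepw n (by omega)
    refine ⟨istar, hi, ?_, ?_⟩
    · intro i hi2
      rw [hw n le_rfl, hw 0 (by omega)]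
      have h1 := hss i
      have h2 := h.complete i hi2
      omega
    · intro j hj
      obtain ⟨s, hs, hss'⟩ := h.stepw j (by omega)
      refine ⟨s, hs, fun i => ?_⟩
      rw [hw (j+1) (by omega), hw j (by omega)]
      exact hss' i

/-- unified fiber classification over a door -/
theorem fiber_classify (hp : 1 ≤ p) {v0 : ℕ → ℕ → ℕ} {k0 : ℕ}
    (h : IsSimp (n+1) p v0) (hk0 : k0 ≤ n+1)
    (ℓ : (ℕ → ℕ) → ℕ) (hfull : fullS n ℓ (face n k0 v0))
    (h0 : ∀ x i, x i = 0 → ℓ x ≤ i)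
    (hpp : ∀ x i, i < n+1 → x i = p → ℓ x ≠ i) :
    (∃ q1 q2 : (ℕ → ℕ → ℕ) × ℕ, q1 ≠ q2 ∧
      {q : (ℕ → ℕ → ℕ) × ℕ | IsSimp (n+1) p q.1 ∧ q.2 ≤ n+1 ∧
        face n q.2 q.1 = face n k0 v0} = {q1, q2}
      ∧ ¬ IsSimp n p (face n k0 v0)) ∨
    (∃ q1 : (ℕ → ℕ → ℕ) × ℕ,
      {q : (ℕ → ℕ → ℕ) × ℕ | IsSimp (n+1) p q.1 ∧ q.2 ≤ n+1 ∧
        face n q.2 q.1 = face n k0 v0} = {q1}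
      ∧ IsSimp n p (face n k0 v0)) := by
  by_cases hmid : 1 ≤ k0 ∧ k0 ≤ n
  · obtain ⟨hpair, hnot⟩ := fiber_caseB h hmid.1 hmid.2
    obtain ⟨q1, q2, hne, hset⟩ := hpair
    exact Or.inl ⟨q1, q2, hne, hset, hnot⟩
  · have hk01 : k0 = 0 ∨ k0 = n+1 := by omega
    obtain ⟨istar, histar, hstar, hwstep⟩ := caseA_package h hk01
    have hsig : ∃ s0, ∀ j ≤ n, ssum (n+1) (face n k0 v0 j) = s0 + j := by
      rcases hk01 with rfl | rfl
      · refine ⟨ssum (n+1) (v0 0) + 1, fun j hj => ?_⟩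
        rw [w_ssum h (by omega) j hj, if_neg (by omega)]
        omega
      · refine ⟨ssum (n+1) (v0 0), fun j hj => ?_⟩
        rw [w_ssum h (by omega) j hj, if_pos (by omega)]
        omega
    exact fiber_caseA hp histar (w_zero h hk0) (w_grid h hk0)
      (fun j j' i hjj => w_mono h hk0 j j' i hjj) (face_padded n k0 v0)
      hsig hstar hwstep ℓ hfull h0 hpp

/-- every `n`-simplex is the top face of an `(n+1)`-simplex -/
theorem exists_extension (hp : 1 ≤ p) {u : ℕ → ℕ → ℕ} (hu : IsSimp n p u) :
    ∃ v, IsSimp (n+1) p v ∧ face n (n+1) v = u := by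
  set xQ : ℕ → ℕ := fun i => u n i + if i = n then 1 else 0 with hxQ
  set vQ : ℕ → ℕ → ℕ := fun j => if j ≤ n then u j else xQ with hvQ
  have hvQj : ∀ j, j ≤ n → vQ j = u j := by
    intro j hj; simp only [hvQ, if_pos hj]
  have hvQt : ∀ j, n < j → vQ j = xQ := by
    intro j hj; simp only [hvQ, if_neg (by omega : ¬ j ≤ n)]
  have hun : ∀ k, u k n = 0 := fun k => hu.zero' k n le_rfl
  refine ⟨vQ, ⟨?_, ?_, ?_, ?_, ?_⟩, ?_⟩
  · intro k hk
    by_cases hkn : k = n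
    · rw [hkn]
      refine ⟨n, by omega, ?_⟩
      rw [hvQt (n+1) (by omega), hvQj n le_rfl]
      apply eq_update_of_pointwise
      intro i
      simp only [hxQ]
    · obtain ⟨s, hs, hss⟩ := hu.stepw k (by omega)
      refine ⟨s, by omega, ?_⟩
      rw [hvQj (k+1) (by omega), hvQj k (by omega)]
      exact eq_update_of_pointwise hss
  · intro i hi
    rw [hvQt (n+1) (by omega), hvQj 0 (by omega)]
    simp only [hxQ]
    rcases eq_or_ne n i with rfl | hne
    · rw [if_pos rfl, hun n, hu.zero n le_rfl]
    · rw [if_neg (fun hh : i = n => hne hh.symm)]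
      exact hu.complete i (by omega)
  · intro i hi
    rw [hvQj 0 (by omega)]
    exact hu.zero i (by omega)
  · intro i
    rw [hvQt (n+1) (by omega)]
    simp only [hxQ]
    rcases eq_or_ne n i with rfl | hne
    · rw [if_pos rfl, hun n]; omega
    · rw [if_neg (fun hh : i = n => hne hh.symm)]
      have := hu.grid i
      omega
  · intro k hk
    rw [hvQt k (by omega), hvQt (n+1) (by omega)]
  · funext j
    have h1 : min j n < n + 1 := by omega
    unfold face
    simp only [if_pos h1]
    rw [hvQj (min j n) (min_le_right _ _)]
    rcases le_or_gt j n with hj | hj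
    · rw [min_eq_left hj]
    · rw [min_eq_right (by omega), hu.pad j (by omega)]

/-- finiteness of the set of simplices -/
theorem simp_finite (N q : ℕ) : {v : ℕ → ℕ → ℕ | IsSimp N q v}.Finite := by
  set Φ : (Fin (N+1) → Fin N → Fin (q+1)) → (ℕ → ℕ → ℕ) := fun g k i =>
    if hk : k < N+1 then
      (if hi : i < N then (g ⟨k, hk⟩ ⟨i, hi⟩ : ℕ) else 0)
    else
      (if hi : i < N then (g ⟨N, by omega⟩ ⟨i, hi⟩ : ℕ) else 0) with hΦ
  apply Set.Finite.subset (Set.finite_range Φ)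
  intro v hv
  refine ⟨fun k i => ⟨v k i, by have := hv.grid' k i; omega⟩, ?_⟩
  funext k i
  simp only [hΦ]
  split
  · split
    · rfl
    · exact (hv.zero' k i (by omega)).symm
  · split
    · rw [hv.pad k (by omega)]
    · exact (hv.zero' k i (by omega)).symm

end Kuhn

namespace Kuhn
open scoped Classical

/-- **Kuhn's combinatorial lemma** (parity version): the number of completely
labelled Kuhn simplices in the grid `{0,…,p}^n` is odd. -/
theorem kuhn_parity (p : ℕ) (hp : 1 ≤ p) (ℓ : (ℕ → ℕ) → ℕ)
    (h0 : ∀ x i, x i = 0 → ℓ x ≤ i) :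
    ∀ n, (∀ x i, i < n → x i = p → ℓ x ≠ i) →
      (({v : ℕ → ℕ → ℕ | IsSimp n p v ∧ fullS n ℓ v}.ncard : ZMod 2) = 1) := by
  intro n
  induction n with
  | zero =>
    intro _
    have hset : {v : ℕ → ℕ → ℕ | IsSimp 0 p v ∧ fullS 0 ℓ v}
        = {fun _ _ => 0} := by
      ext v
      simp only [Set.mem_setOf_eq, Set.mem_singleton_iff]
      constructor
      · rintro ⟨hv, -⟩
        funext k i
        rw [hv.pad k (by omega), hv.zero i (by omega)]
      · rintro rfl
        refine ⟨⟨?_, ?_, ?_, ?_, ?_⟩, ?_⟩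
        · intro k hk; exact absurd hk (by omega)
        · intro i hi; exact absurd hi (by omega)
        · intro i _; rfl
        · intro i; exact Nat.zero_le p
        · intro k _; rfl
        · intro m hm
          refine ⟨0, le_rfl, ?_⟩
          have := h0 ((fun _ _ => 0) 0) 0 rfl
          omega
    rw [hset, Set.ncard_singleton]
    rfl
  | succ n ih =>
    intro hpp
    have hSfin := simp_finite (n+1) p
    set SF : Finset (ℕ → ℕ → ℕ) := hSfin.toFinset with hSF
    set T : Finset ((ℕ → ℕ → ℕ) × ℕ) := SF ×ˢ Finset.range (n+2) with hT
    set P : Finset ((ℕ → ℕ → ℕ) × ℕ) :=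
      T.filter (fun q => fullS n ℓ (face n q.2 q.1)) with hPdef
    set DF : Finset (ℕ → ℕ → ℕ) := P.image (fun q => face n q.2 q.1) with hDF
    have hmemSF : ∀ v, v ∈ SF ↔ IsSimp (n+1) p v := by
      intro v; rw [hSF, Set.Finite.mem_toFinset]; exact Iff.rfl
    have hmemT : ∀ q : (ℕ → ℕ → ℕ) × ℕ, q ∈ T ↔ IsSimp (n+1) p q.1 ∧ q.2 ≤ n+1 := by
      intro q
      rw [hT, Finset.mem_product, hmemSF, Finset.mem_range]
      constructor
      · rintro ⟨h1, h2⟩; exact ⟨h1, by omega⟩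
      · rintro ⟨h1, h2⟩; exact ⟨h1, by omega⟩
    -- first count : by simplices
    have hcount1 : (P.card : ZMod 2)
        = ((SF.filter (fun v => fullS (n+1) ℓ v)).card : ZMod 2) := by
      rw [Finset.card_eq_sum_card_fiberwise
        (f := Prod.fst) (s := P) (t := SF)
        (fun q hq => by
          have h1 := (Finset.mem_filter.mp hq).1
          exact (Finset.mem_product.mp (hT ▸ h1)).1)]
      push_cast
      have hfib : ∀ v ∈ SF, ((P.filter (fun q => q.1 = v)).card : ZMod 2)
          = if fullS (n+1) ℓ v then 1 else 0 := by
        intro v hv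
        have hbij : (P.filter (fun q => q.1 = v)).card
            = ((Finset.range (n+2)).filter (fun k => fullS n ℓ (face n k v))).card := by
          apply Finset.card_bij (fun q _ => q.2)
          · rintro ⟨v', k⟩ hq
            obtain ⟨hqP, hq1⟩ := Finset.mem_filter.mp hq
            obtain ⟨hqT, hqfull⟩ := Finset.mem_filter.mp hqP
            simp only at hq1
            subst hq1
            refine Finset.mem_filter.mpr ⟨?_, hqfull⟩
            exact (Finset.mem_product.mp (hT ▸ hqT)).2
          · rintro ⟨v1, k1⟩ hq1 ⟨v2, k2⟩ hq2 he
            simp only at he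
            obtain ⟨-, h1⟩ := Finset.mem_filter.mp hq1
            obtain ⟨-, h2⟩ := Finset.mem_filter.mp hq2
            simp only at h1 h2
            subst h1; subst h2; subst he
            rfl
          · intro k hk
            obtain ⟨hkr, hkfull⟩ := Finset.mem_filter.mp hk
            refine ⟨(v, k), Finset.mem_filter.mpr ⟨Finset.mem_filter.mpr ⟨?_, ?_⟩, rfl⟩, rfl⟩
            · rw [hT, Finset.mem_product]
              exact ⟨hv, hkr⟩
            · exact hkfull
        rw [hbij]
        exact L1 ((hmemSF v).mp hv) h0
      rw [Finset.sum_congr rfl hfib, ← Finset.sum_filter, Finset.sum_const, nsmul_eq_mul, mul_one]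
    -- second count : by doors
    have hcount2 : (P.card : ZMod 2)
        = ((DF.filter (fun w => IsSimp n p w)).card : ZMod 2) := by
      rw [Finset.card_eq_sum_card_fiberwise
        (f := fun q => face n q.2 q.1) (s := P) (t := DF)
        (fun q hq => Finset.mem_image_of_mem _ hq)]
      push_cast
      have hfib : ∀ w ∈ DF, ((P.filter (fun q => face n q.2 q.1 = w)).card : ZMod 2)
          = if IsSimp n p w then 1 else 0 := by
        intro w hw
        obtain ⟨q0, hq0P, hq0face⟩ := Finset.mem_image.mp hw
        obtain ⟨hq0T, hq0full⟩ := Finset.mem_filter.mp hq0P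
        obtain ⟨hT1, hT2⟩ := (hmemT q0).mp hq0T
        subst hq0face
        have hsetmem : ∀ q : (ℕ → ℕ → ℕ) × ℕ,
            q ∈ P.filter (fun q => face n q.2 q.1 = face n q0.2 q0.1) ↔
            (IsSimp (n+1) p q.1 ∧ q.2 ≤ n+1 ∧ face n q.2 q.1 = face n q0.2 q0.1) := by
          intro q
          rw [Finset.mem_filter, Finset.mem_filter, hmemT]
          constructor
          · rintro ⟨⟨⟨ha, hb⟩, -⟩, hc⟩
            exact ⟨ha, hb, hc⟩
          · rintro ⟨ha, hb, hc⟩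
            refine ⟨⟨⟨ha, hb⟩, ?_⟩, hc⟩
            rw [hc]
            exact hq0full
        rcases fiber_classify hp hT1 hT2 ℓ hq0full h0 hpp with
          ⟨q1, q2, hne, hset, hnot⟩ | ⟨q1, hset, hyes⟩
        · have : P.filter (fun q => face n q.2 q.1 = face n q0.2 q0.1) = {q1, q2} := by
            ext q
            rw [hsetmem q]
            have := Set.ext_iff.mp hset q
            simp only [Set.mem_setOf_eq, Set.mem_insert_iff, Set.mem_singleton_iff] at this
            rw [this]
            simp [Finset.mem_insert]
          rw [this, Finset.card_pair hne, if_neg hnot]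
          rfl
        · have : P.filter (fun q => face n q.2 q.1 = face n q0.2 q0.1) = {q1} := by
            ext q
            rw [hsetmem q]
            have := Set.ext_iff.mp hset q
            simp only [Set.mem_setOf_eq, Set.mem_singleton_iff] at this
            rw [this]
            simp
          rw [this, Finset.card_singleton, if_pos hyes]
          exact Nat.cast_one
      rw [Finset.sum_congr rfl hfib, ← Finset.sum_filter, Finset.sum_const, nsmul_eq_mul, mul_one]
    -- identify the two extreme finsets with the two sets
    have hUfin : {u : ℕ → ℕ → ℕ | IsSimp n p u ∧ fullS n ℓ u}.Finite :=
      (simp_finite n p).subset (fun u hu => hu.1)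
    have hVfin : {v : ℕ → ℕ → ℕ | IsSimp (n+1) p v ∧ fullS (n+1) ℓ v}.Finite :=
      hSfin.subset (fun u hu => hu.1)
    have hD : DF.filter (fun w => IsSimp n p w) = hUfin.toFinset := by
      ext w
      rw [Finset.mem_filter, Set.Finite.mem_toFinset, Set.mem_setOf_eq]
      constructor
      · rintro ⟨hw, hsimp⟩
        obtain ⟨q, hqP, hqface⟩ := Finset.mem_image.mp hw
        obtain ⟨-, hqfull⟩ := Finset.mem_filter.mp hqP
        rw [hqface] at hqfull
        exact ⟨hsimp, hqfull⟩
      · rintro ⟨hsimp, hfull⟩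
        obtain ⟨v, hv, hvface⟩ := exists_extension hp hsimp
        have hmem : (v, n+1) ∈ P := by
          refine Finset.mem_filter.mpr ⟨(hmemT (v, n+1)).mpr ⟨hv, le_rfl⟩, ?_⟩
          simp only
          rw [hvface]
          exact hfull
        refine ⟨Finset.mem_image.mpr ⟨(v, n+1), hmem, by simp only; rw [hvface]⟩, hsimp⟩
    have hV : SF.filter (fun v => fullS (n+1) ℓ v) = hVfin.toFinset := by
      ext v
      simp only [Finset.mem_filter, hSF, Set.Finite.mem_toFinset, Set.mem_setOf_eq]
    rw [Set.ncard_eq_toFinset_card _ hVfin, ← hV, ← hcount1, hcount2, hD,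
      ← Set.ncard_eq_toFinset_card _ hUfin]
    exact ih (fun x i hi => hpp x i (by omega))
end Kuhn

namespace Kuhn

theorem kuhn_exists (n p : ℕ) (hp : 1 ≤ p) (ℓ : (ℕ → ℕ) → ℕ)
    (h0 : ∀ x i, x i = 0 → ℓ x ≤ i)
    (hpp : ∀ x i, i < n → x i = p → ℓ x ≠ i) :
    ∃ v, IsSimp n p v ∧ fullS n ℓ v := by
  have h := kuhn_parity p hp ℓ h0 n hpp
  by_contra hcon
  push_neg at hcon
  have : {v : ℕ → ℕ → ℕ | IsSimp n p v ∧ fullS n ℓ v} = ∅ := by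
    ext v
    simp only [Set.mem_setOf_eq, Set.mem_empty_iff_false, iff_false, not_and]
    exact hcon v
  rw [this] at h
  simp at h

end Kuhn

def unitCube' (n : ℕ) : Set (Fin n → ℝ) :=
  {x | ∀ i : Fin n, x i ∈ Set.Icc (0 : ℝ) 1}

theorem isCompact_unitCube' (n : ℕ) : IsCompact (unitCube' n) := by
  have : unitCube' n = Set.pi Set.univ (fun _ : Fin n => Set.Icc (0:ℝ) 1) := by
    ext x
    simp [unitCube', Set.pi]
  rw [this]
  exact isCompact_univ_pi (fun _ => isCompact_Icc)

/-- the point of the cube corresponding to a grid point of `{0,…,m+1}^n` -/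
noncomputable def gridPoint (n m : ℕ) (x : ℕ → ℕ) : ↥(unitCube' n) :=
  ⟨fun i => ((min (x i.1) (m+1) : ℕ) : ℝ) / ((m:ℝ)+1), by
    intro i
    constructor
    · positivity
    · rw [div_le_one (by positivity)]
      have : (min (x i.1) (m+1) : ℕ) ≤ m + 1 := min_le_right _ _
      calc ((min (x i.1) (m+1) : ℕ) : ℝ) ≤ ((m+1 : ℕ) : ℝ) := Nat.cast_le.mpr this
        _ = (m:ℝ) + 1 := by push_cast; ring⟩

theorem gridPoint_apply (n m : ℕ) (x : ℕ → ℕ) (i : Fin n) :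
    (gridPoint n m x : Fin n → ℝ) i = ((min (x i.1) (m+1) : ℕ) : ℝ) / ((m:ℝ)+1) := rfl

theorem gridPoint_zero (n m : ℕ) (x : ℕ → ℕ) (i : Fin n) (hx : x i.1 = 0) :
    (gridPoint n m x : Fin n → ℝ) i = 0 := by
  rw [gridPoint_apply, hx]
  simp

theorem gridPoint_one (n m : ℕ) (x : ℕ → ℕ) (i : Fin n) (hx : x i.1 = m+1) :
    (gridPoint n m x : Fin n → ℝ) i = 1 := by
  rw [gridPoint_apply, hx, min_self]
  rw [div_eq_one_iff_eq (by positivity)]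
  push_cast
  ring

theorem statement15' (n : ℕ)
    (F : ↥(unitCube' n) → ↥(unitCube' n)) (hF : Continuous F)
    (hA : ∀ (i : Fin n) (x : ↥(unitCube' n)),
      (x : Fin n → ℝ) i = 0 → (F x : Fin n → ℝ) i = 0)
    (hO : ∀ (i : Fin n) (x : ↥(unitCube' n)),
      (x : Fin n → ℝ) i = 1 → (F x : Fin n → ℝ) i = 1) :
    Function.Surjective F := by
  classical
  intro y
  haveI : CompactSpace ↥(unitCube' n) :=
    isCompact_iff_compactSpace.mp (isCompact_unitCube' n)
  -- the labelling
  set L : ℕ → (ℕ → ℕ) → ℕ := fun m x => sInf {j | j = n ∨ ∃ hj : j < n,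
    x j = 0 ∨ (F (gridPoint n m x) : Fin n → ℝ) ⟨j, hj⟩ < (y : Fin n → ℝ) ⟨j, hj⟩} with hL
  have hLne : ∀ m x, {j | j = n ∨ ∃ hj : j < n,
      x j = 0 ∨ (F (gridPoint n m x) : Fin n → ℝ) ⟨j, hj⟩ < (y : Fin n → ℝ) ⟨j, hj⟩}.Nonempty :=
    fun m x => ⟨n, Or.inl rfl⟩
  have hLmem : ∀ m x, L m x ∈ {j | j = n ∨ ∃ hj : j < n,
      x j = 0 ∨ (F (gridPoint n m x) : Fin n → ℝ) ⟨j, hj⟩ < (y : Fin n → ℝ) ⟨j, hj⟩} :=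
    fun m x => Nat.sInf_mem (hLne m x)
  have hLlt : ∀ m x j, j ∈ {j | j = n ∨ ∃ hj : j < n,
      x j = 0 ∨ (F (gridPoint n m x) : Fin n → ℝ) ⟨j, hj⟩ < (y : Fin n → ℝ) ⟨j, hj⟩} →
      L m x ≤ j := fun m x j hj => Nat.sInf_le hj
  have hLle : ∀ m x, L m x ≤ n := fun m x => hLlt m x n (Or.inl rfl)
  -- label conditions
  have h0 : ∀ m x i, x i = 0 → L m x ≤ i := by
    intro m x i hx
    rcases lt_or_ge i n with hi | hi
    · exact hLlt m x i (Or.inr ⟨hi, Or.inl hx⟩)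
    · exact le_trans (hLle m x) hi
  have hpp : ∀ m x i, i < n → x i = m + 1 → L m x ≠ i := by
    intro m x i hi hx hcon
    have hmem := hLmem m x
    rw [hcon] at hmem
    rcases hmem with h1 | ⟨hj, h2 | h2⟩
    · omega
    · omega
    · have hF1 : (F (gridPoint n m x) : Fin n → ℝ) ⟨i, hj⟩ = 1 :=
        hO ⟨i, hj⟩ (gridPoint n m x) (gridPoint_one n m x ⟨i, hj⟩ hx)
      have hy1 : (y : Fin n → ℝ) ⟨i, hj⟩ ≤ 1 := ((y.2 ⟨i, hj⟩).2)
      rw [hF1] at h2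
      linarith
  -- semantics of labels
  have lem1 : ∀ m x (i : Fin n), L m x = i.1 →
      (F (gridPoint n m x) : Fin n → ℝ) i ≤ (y : Fin n → ℝ) i := by
    intro m x i hl
    have hmem := hLmem m x
    rw [hl] at hmem
    rcases hmem with h1 | ⟨hj, h2 | h2⟩
    · exact absurd h1 (by omega)
    · have : (F (gridPoint n m x) : Fin n → ℝ) i = 0 :=
        hA i (gridPoint n m x) (gridPoint_zero n m x i h2)
      rw [this]
      exact (y.2 i).1
    · exact le_of_lt h2
  have lem2 : ∀ m x (i : Fin n), i.1 < L m x →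
      (y : Fin n → ℝ) i ≤ (F (gridPoint n m x) : Fin n → ℝ) i := by
    intro m x i hl
    by_contra hcon
    push_neg at hcon
    have h9 : L m x ≤ i.1 := hLlt m x i.1 (Or.inr ⟨i.isLt, Or.inr hcon⟩)
    omega
  -- get the simplices
  have hex : ∀ m : ℕ, ∃ v, Kuhn.IsSimp n (m+1) v ∧ Kuhn.fullS n (L m) v :=
    fun m => Kuhn.kuhn_exists n (m+1) (by omega) (L m) (h0 m) (hpp m)
  choose v hv1 hv2 using hex
  -- vertices are close together
  have hdist : ∀ m k, k ≤ n →
      dist (gridPoint n m (v m k)) (gridPoint n m (v m 0)) ≤ 1 / ((m:ℝ)+1) := by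
    intro m k hk
    rw [Subtype.dist_eq]
    rw [dist_pi_le_iff (by positivity)]
    intro i
    have hg1 : v m k i.1 ≤ m + 1 := (hv1 m).grid' k i.1
    have hg0 : v m 0 i.1 ≤ m + 1 := (hv1 m).grid' 0 i.1
    show dist ((gridPoint n m (v m k) : Fin n → ℝ) i) ((gridPoint n m (v m 0) : Fin n → ℝ) i)
        ≤ 1 / ((m:ℝ)+1)
    rw [gridPoint_apply, gridPoint_apply, min_eq_left hg1, min_eq_left hg0,
      Real.dist_eq, ← sub_div, abs_div, abs_of_pos (by positivity : (0:ℝ) < (m:ℝ)+1)]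
    gcongr
    have h1 : v m 0 i.1 ≤ v m k i.1 := (hv1 m).mono 0 k i.1 (Nat.zero_le k)
    have h2 : v m k i.1 ≤ v m 0 i.1 + 1 := by
      have h3 := (hv1 m).mono k n i.1 hk
      have h4 := (hv1 m).complete i.1 i.isLt
      omega
    have hc1 : ((v m 0 i.1 : ℕ) : ℝ) ≤ ((v m k i.1 : ℕ) : ℝ) := Nat.cast_le.mpr h1
    have hc2 : ((v m k i.1 : ℕ) : ℝ) ≤ ((v m 0 i.1 : ℕ) : ℝ) + 1 := by exact_mod_cast h2
    rw [abs_le]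
    constructor <;> linarith
  -- compactness : converging subsequence of base points
  obtain ⟨xstar, -, φ, hφ, hconv⟩ :=
    isCompact_univ.tendsto_subseq (x := fun m => gridPoint n m (v m 0))
      (fun m => Set.mem_univ _)
  refine ⟨xstar, ?_⟩
  have hrec : Filter.Tendsto (fun j : ℕ => 1 / ((φ j : ℝ) + 1)) Filter.atTop (nhds 0) := by
    have h1 : Filter.Tendsto (fun m : ℕ => 1 / ((m : ℝ) + 1)) Filter.atTop (nhds 0) :=
      tendsto_one_div_add_atTop_nhds_zero_nat
    exact h1.comp hφ.tendsto_atTop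
  have hxconv : Filter.Tendsto
      (fun j => dist (gridPoint n (φ j) (v (φ j) 0)) xstar) Filter.atTop (nhds 0) :=
    tendsto_iff_dist_tendsto_zero.mp hconv
  -- the key coordinatewise equation
  have key : ∀ i : Fin n, (F xstar : Fin n → ℝ) i = (y : Fin n → ℝ) i := by
    intro i
    have hex1 : ∀ m, ∃ k ≤ n, L m (v m k) = i.1 := fun m => hv2 m i.1 (by omega)
    have hex2 : ∀ m, ∃ k ≤ n, L m (v m k) = i.1 + 1 := fun m => hv2 m (i.1+1) (by omega)
    choose k1 hk1le hk1lab using hex1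
    choose k2 hk2le hk2lab using hex2
    have haF : ∀ m, (F (gridPoint n m (v m (k1 m))) : Fin n → ℝ) i ≤ (y : Fin n → ℝ) i :=
      fun m => lem1 m (v m (k1 m)) i (hk1lab m)
    have hbF : ∀ m, (y : Fin n → ℝ) i ≤ (F (gridPoint n m (v m (k2 m))) : Fin n → ℝ) i :=
      fun m => lem2 m (v m (k2 m)) i (by rw [hk2lab m]; omega)
    have hconvgen : ∀ k : ℕ → ℕ, (∀ m, k m ≤ n) →
        Filter.Tendsto (fun j => gridPoint n (φ j) (v (φ j) (k (φ j)))) Filter.atTop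
          (nhds xstar) := by
      intro k hkle
      rw [tendsto_iff_dist_tendsto_zero]
      apply squeeze_zero (fun j => dist_nonneg)
        (g := fun j => 1 / ((φ j : ℝ) + 1) + dist (gridPoint n (φ j) (v (φ j) 0)) xstar)
      · intro j
        refine le_trans (dist_triangle _ (gridPoint n (φ j) (v (φ j) 0)) _) ?_
        have h1 := hdist (φ j) (k (φ j)) (hkle (φ j))
        gcongr
      · have := hrec.add hxconv
        simpa using this
    have hconva := hconvgen k1 hk1le
    have hconvb := hconvgen k2 hk2le
    have hGcont : Continuous (fun z : ↥(unitCube' n) => (F z : Fin n → ℝ) i) :=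
      (continuous_apply i).comp (continuous_subtype_val.comp hF)
    have hFa : Filter.Tendsto (fun j => (F (gridPoint n (φ j) (v (φ j) (k1 (φ j)))) : Fin n → ℝ) i)
        Filter.atTop (nhds ((F xstar : Fin n → ℝ) i)) :=
      (hGcont.continuousAt.tendsto).comp hconva
    have hFb : Filter.Tendsto (fun j => (F (gridPoint n (φ j) (v (φ j) (k2 (φ j)))) : Fin n → ℝ) i)
        Filter.atTop (nhds ((F xstar : Fin n → ℝ) i)) :=
      (hGcont.continuousAt.tendsto).comp hconvb
    have hle : (F xstar : Fin n → ℝ) i ≤ (y : Fin n → ℝ) i :=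
      le_of_tendsto hFa (Filter.Eventually.of_forall (fun j => haF (φ j)))
    have hge : (y : Fin n → ℝ) i ≤ (F xstar : Fin n → ℝ) i :=
      ge_of_tendsto hFb (Filter.Eventually.of_forall (fun j => hbF (φ j)))
    linarith
  exact Subtype.ext (funext key)


/-- For `n ≥ 1`, a continuous self-map of the cube `[0,1]^n` preserving
each axial face `A_i = {x : x_i = 0}` and each opposite face `O_i = {x : x_i = 1}` is
surjective. -/
theorem statement15 (n : ℕ) (hn : 1 ≤ n)
    (F : ↥(unitCube n) → ↥(unitCube n)) (hF : Continuous F)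
    (hA : ∀ (i : Fin n) (x : ↥(unitCube n)),
      (x : Fin n → ℝ) i = 0 → (F x : Fin n → ℝ) i = 0)
    (hO : ∀ (i : Fin n) (x : ↥(unitCube n)),
      (x : Fin n → ℝ) i = 1 → (F x : Fin n → ℝ) i = 1) :
    Function.Surjective F := by
  exact statement15' n F hF hA hO
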